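/- Let M ∈ S^m_+ have rank r and let E be an m×(m−r) matrix whose orthonormal columns span Ker M. Then the lineality space (largest linear subspace) of the tangent cone T_{S^m_+}(M) equals {N ∈ S^m : Eᵀ N E = 0}. -/
import Mathlib


open Matrix

/-- Let `M ∈ S^m_+` have rank `r` and `E` span `Ker M` orthonormally.  The lineality
space `K ∩ (-K)` of the tangent cone `K = {N ∈ S^m : dᵀNd ≥ 0 ∀ d ∈ Ker M}` equals
`{N ∈ S^m : Eᵀ N E = 0}`. -/
theorem lineality_space_tangent_cone (m r : ℕ)
    (M : Matrix (Fin m) (Fin m) ℝ) (hM : M.PosSemidef) (hrank : M.rank = r)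
    (E : Matrix (Fin m) (Fin (m - r)) ℝ) (hE : Eᵀ * E = 1) (hker : M * E = 0) :
    {N : Matrix (Fin m) (Fin m) ℝ | N.IsSymm ∧
        (∀ v : Fin m → ℝ, M.mulVec v = 0 → 0 ≤ v ⬝ᵥ N.mulVec v) ∧
        (∀ v : Fin m → ℝ, M.mulVec v = 0 → 0 ≤ v ⬝ᵥ (-N).mulVec v)} =
    {N : Matrix (Fin m) (Fin m) ℝ | N.IsSymm ∧ Eᵀ * N * E = 0} := by
  -- columns of E
  set f : Fin (m - r) → (Fin m → ℝ) := fun j i => E i j with hf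
  have hEmul : ∀ c : Fin (m - r) → ℝ, ∑ j, c j • f j = E.mulVec c := by
    intro c
    funext i
    simp [f, mulVec, dotProduct, mul_comm, Finset.sum_apply]
  have hfker : ∀ j, M.mulVec (f j) = 0 := by
    intro j
    funext i
    have : (M * E) i j = 0 := by rw [hker]; rfl
    simpa [mulVec, dotProduct, Matrix.mul_apply, f] using this
  -- symmetry of the bilinear form
  have hsymm : ∀ (N : Matrix (Fin m) (Fin m) ℝ), N.IsSymm →
      ∀ v w : Fin m → ℝ, v ⬝ᵥ N.mulVec w = w ⬝ᵥ N.mulVec v := by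
    intro N hN v w
    rw [dotProduct_mulVec, ← mulVec_transpose, hN.eq, dotProduct_comm]
  ext N
  simp only [Set.mem_setOf_eq]
  constructor
  · rintro ⟨hN, h1, h2⟩
    refine ⟨hN, ?_⟩
    have hq : ∀ v : Fin m → ℝ, M.mulVec v = 0 → v ⬝ᵥ N.mulVec v = 0 := by
      intro v hv
      have := h1 v hv
      have h2' := h2 v hv
      rw [Matrix.neg_mulVec, dotProduct_neg] at h2'
      linarith
    ext i j
    have hij : (Eᵀ * N * E) i j = f i ⬝ᵥ N.mulVec (f j) := by
      simp [Matrix.mul_apply, dotProduct, mulVec, f, Finset.mul_sum, Finset.sum_mul]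
      rw [Finset.sum_comm]
      apply Finset.sum_congr rfl
      intro k _
      apply Finset.sum_congr rfl
      intro l _
      ring
    have hadd : M.mulVec (f i + f j) = 0 := by
      rw [Matrix.mulVec_add, hfker, hfker, add_zero]
    have hexp := hq (f i + f j) hadd
    rw [Matrix.mulVec_add, dotProduct_add, add_dotProduct, add_dotProduct] at hexp
    rw [hq (f i) (hfker i), hq (f j) (hfker j)] at hexp
    have hsw : f j ⬝ᵥ N.mulVec (f i) = f i ⬝ᵥ N.mulVec (f j) := hsymm N hN (f j) (f i)
    rw [hsw] at hexp
    have : f i ⬝ᵥ N.mulVec (f j) = 0 := by linarith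
    simp [hij, this]
  · rintro ⟨hN, hENE⟩
    -- span of columns of E equals ker
    have hli : LinearIndependent ℝ f := by
      rw [Fintype.linearIndependent_iff]
      intro g hg i
      rw [hEmul] at hg
      have : (Eᵀ * E).mulVec g = 0 := by
        rw [← mulVec_mulVec, hg, Matrix.mulVec_zero]
      rw [hE, Matrix.one_mulVec] at this
      exact congrFun this i
    have hrle : r ≤ m := by
      have := Matrix.rank_le_card_width M
      simp at this
      omega
    have hkerdim : Module.finrank ℝ (LinearMap.ker M.mulVecLin) = m - r := by
      have h := LinearMap.finrank_range_add_finrank_ker M.mulVecLin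
      have : Module.finrank ℝ (LinearMap.range M.mulVecLin) = r := by
        rw [← hrank]; rfl
      simp [this, Module.finrank_fin_fun] at h
      omega
    have hle : Submodule.span ℝ (Set.range f) ≤ LinearMap.ker M.mulVecLin := by
      rw [Submodule.span_le]
      rintro v ⟨j, rfl⟩
      simp [LinearMap.mem_ker, Matrix.mulVecLin_apply, hfker j]
    have hspan : Submodule.span ℝ (Set.range f) = LinearMap.ker M.mulVecLin := by
      apply Submodule.eq_of_le_of_finrank_le hle
      rw [hkerdim, finrank_span_eq_card hli]
      simp
    refine ⟨hN, fun v hv => ?_, fun v hv => ?_⟩ <;>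
    · have hv' : v ∈ Submodule.span ℝ (Set.range f) := by
        rw [hspan]
        simpa [LinearMap.mem_ker, Matrix.mulVecLin_apply] using hv
      rw [Submodule.mem_span_range_iff_exists_fun] at hv'
      obtain ⟨c, hc⟩ := hv'
      rw [hEmul] at hc
      subst hc
      have key : (E.mulVec c) ⬝ᵥ N.mulVec (E.mulVec c) = 0 := by
        have h0 : c ⬝ᵥ (Eᵀ * N * E) *ᵥ c = 0 := by rw [hENE, Matrix.zero_mulVec, dotProduct_zero]
        have h1 : (Eᵀ * N * E) *ᵥ c = Eᵀ *ᵥ (N *ᵥ (E *ᵥ c)) := by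
          rw [mulVec_mulVec, mulVec_mulVec, Matrix.mul_assoc]
        rw [h1, mulVec_transpose, dotProduct_comm, ← dotProduct_mulVec, dotProduct_comm] at h0
        exact h0
      simp only [Matrix.neg_mulVec, dotProduct_neg, key, neg_zero, le_refl]
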